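/- For every real number \(q > 1\), every real number \(t > 0\), and every natural number b, the series \(\sum_{e=0}^{\infty} \frac{q^{1-2e}}{q-1}\) converges and \(\frac{1}{q}\Big(1-\frac{1}{q}\Big)^{2}\Big[\sum_{e=-2b-1}^{-1} q^{2(e+1)}\, t^{e}\, \frac{q^{1-2e}}{q-1} + \sum_{e=0}^{\infty} \frac{q^{1-2e}}{q-1}\Big] = (q-1)\sum_{e=-2b-1}^{-1} t^{e} + \frac{1}{q+1}\). -/

import Mathlib

/-- Equation (6.15): evaluation of the contribution of the anti-diagonal orbit
representatives to the local density `α(S_r, T)`, with `t = q^{2r}`. -/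
theorem antidiagonal_contribution {q t : ℝ} (hq : 1 < q) (ht : 0 < t) (b : ℕ) :
    (Summable fun e : ℕ => q ^ ((1 : ℤ) - 2 * (e : ℤ)) / (q - 1)) ∧
    (1 / q) * (1 - 1 / q) ^ 2 *
        ((∑ e ∈ Finset.Icc (-2 * (b : ℤ) - 1) (-1),
            q ^ (2 * (e + 1)) * t ^ e * (q ^ (1 - 2 * e) / (q - 1)))
          + ∑' e : ℕ, q ^ ((1 : ℤ) - 2 * (e : ℤ)) / (q - 1)) =
      (q - 1) * (∑ e ∈ Finset.Icc (-2 * (b : ℤ) - 1) (-1), t ^ e) + 1 / (q + 1) := by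
  have hq0 : (0:ℝ) < q := lt_trans one_pos hq
  have hqne : q ≠ 0 := ne_of_gt hq0
  have hq1 : q - 1 ≠ 0 := sub_ne_zero.mpr (ne_of_gt hq)
  have hr0 : (0:ℝ) ≤ (q^2)⁻¹ := by positivity
  have hr2 : (q^2)⁻¹ < 1 := by
    rw [inv_lt_one_iff₀]
    right
    nlinarith
  have key : ∀ e : ℕ, q ^ ((1:ℤ) - 2*(e:ℤ)) / (q-1) = (q/(q-1)) * ((q^2)⁻¹)^e := by
    intro e
    rw [zpow_sub₀ hqne, zpow_one,
      show (2*(e:ℤ)) = ((2*e : ℕ) : ℤ) by push_cast; ring, zpow_natCast, pow_mul]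
    rw [inv_pow]
    field_simp
  have hsum : Summable fun e : ℕ => q ^ ((1:ℤ) - 2*(e:ℤ)) / (q-1) := by
    simp only [key]
    exact (summable_geometric_of_lt_one hr0 hr2).mul_left _
  refine ⟨hsum, ?_⟩
  have htsum : ∑' e : ℕ, q ^ ((1:ℤ) - 2*(e:ℤ)) / (q-1) = (q/(q-1)) * (1 - (q^2)⁻¹)⁻¹ := by
    simp only [key]
    rw [tsum_mul_left, tsum_geometric_of_lt_one hr0 hr2]
  rw [htsum]
  have hterm : ∀ e ∈ Finset.Icc (-2*(b:ℤ)-1) (-1),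
      q ^ (2*(e+1)) * t^e * (q^(1-2*e)/(q-1)) = (q^(3:ℤ)/(q-1)) * t^e := by
    intro e _
    have h3 : q ^ (2*(e+1)) * q^(1-2*e) = q^(3:ℤ) := by
      rw [← zpow_add₀ hqne]
      ring_nf
    field_simp
    exact h3
  rw [Finset.sum_congr rfl hterm, ← Finset.mul_sum]
  have hq2 : (1:ℝ) - (q^2)⁻¹ ≠ 0 := by
    intro h
    have : (q^2)⁻¹ = 1 := by linarith
    exact absurd this (ne_of_lt hr2)
  have hq3 : q + 1 ≠ 0 := by positivity
  have hq21 : q^2 - 1 ≠ 0 := by nlinarith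
  have hinv : (1 - (q^2)⁻¹)⁻¹ = q^2/(q^2-1) := by
    rw [eq_div_iff hq21]
    field_simp
  have h3 : q^(3:ℤ) = q^3 := by
    rw [show (3:ℤ) = ((3:ℕ):ℤ) by norm_num, zpow_natCast]
  rw [h3, hinv]
  field_simp
  ring
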